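/- Let G = (V,E) be a graph and let two nonincreasing-order greedy maximal matchings M and M' be computed with respect to weight vectors ŵ and ŵ' that differ only on a single edge f (with ŵ'_f > ŵ_f and identical tie-breaking by edge index elsewhere). Then the symmetric difference M △ M' is either empty or forms a single path or cycle in G containing f, and in the latter case f ∈ M' \ M. -/

import Mathlib

variable {V : Type*} [DecidableEq V]

/-- Two (oriented) edges share an endpoint. -/
def touches (e f : V × V) : Prop :=
  e.1 = f.1 ∨ e.1 = f.2 ∨ e.2 = f.1 ∨ e.2 = f.2

instance instDecTouches (e f : V × V) : Decidable (touches e f) := by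
  unfold touches; infer_instance

/-- Greedy maximal matching: process the edges of the list in order, adding an
edge whenever both of its endpoints are uncovered by the current matching. -/
def greedyAux : List (V × V) → List (V × V) → List (V × V)
  | acc, [] => acc
  | acc, e :: rest =>
      if acc.any (fun m => decide (touches e m)) then greedyAux acc rest
      else greedyAux (e :: acc) rest

def greedy (l : List (V × V)) : List (V × V) := greedyAux [] l

/-- The allocation that assigns `wh e` to both endpoints of each matching edge. -/
def alloc (wh : V × V → ℝ) (M : List (V × V)) (v : V) : ℝ :=
  (M.map (fun e => if v = e.1 ∨ v = e.2 then wh e else 0)).sum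
/-- An edge set forms a single path or cycle: every vertex meets at most two of
its edges, and any two of its edges are connected through adjacent edges of the set. -/
def IsSinglePathOrCycle [Fintype V] (D : Finset (V × V)) : Prop :=
  (∀ v : V, (D.filter (fun e => e.1 = v ∨ e.2 = v)).card ≤ 2) ∧
    ∀ e ∈ D, ∀ e' ∈ D,
      Relation.ReflTransGen (fun a b => a ∈ D ∧ b ∈ D ∧ touches a b) e e'

section Helpers

set_option linter.unusedSectionVars false

lemma touches_symm {e f : V × V} (h : touches e f) : touches f e := by
  unfold touches at *; tauto

lemma mem_greedyAux_of_mem_acc {a : V × V} :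
    ∀ (l acc : List (V × V)), a ∈ acc → a ∈ greedyAux acc l
  | [], _, h => h
  | e :: rest, acc, h => by
      unfold greedyAux
      split
      · exact mem_greedyAux_of_mem_acc rest acc h
      · exact mem_greedyAux_of_mem_acc rest (e :: acc) (List.mem_cons_of_mem _ h)

lemma mem_of_mem_greedyAux {a : V × V} :
    ∀ (l acc : List (V × V)), a ∈ greedyAux acc l → a ∈ acc ∨ a ∈ l
  | [], _, h => Or.inl h
  | e :: rest, acc, h => by
      unfold greedyAux at h
      split at h
      · rcases mem_of_mem_greedyAux rest acc h with h | h
        · exact Or.inl h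
        · exact Or.inr (List.mem_cons_of_mem _ h)
      · rcases mem_of_mem_greedyAux rest (e :: acc) h with h | h
        · rcases List.mem_cons.1 h with h | h
          · exact Or.inr (h ▸ List.mem_cons_self)
          · exact Or.inl h
        · exact Or.inr (List.mem_cons_of_mem _ h)

lemma pairwise_greedyAux :
    ∀ (l acc : List (V × V)), acc.Pairwise (fun a b => ¬ touches a b) →
      (greedyAux acc l).Pairwise (fun a b => ¬ touches a b)
  | [], _, h => h
  | e :: rest, acc, h => by
      unfold greedyAux
      split
      · exact pairwise_greedyAux rest acc h
      · rename_i hany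
        refine pairwise_greedyAux rest (e :: acc) (List.pairwise_cons.2 ⟨?_, h⟩)
        intro m hm ht
        simp only [List.any_eq_true, decide_eq_true_eq] at hany
        exact hany ⟨m, hm, ht⟩

lemma witness_aux {e : V × V} :
    ∀ (p acc s : List (V × V)), e ∉ greedyAux acc (p ++ e :: s) →
      ∃ m, m ∈ greedyAux acc (p ++ e :: s) ∧ touches e m ∧ (m ∈ acc ∨ m ∈ p)
  | [], acc, s, h => by
      simp only [List.nil_append] at h ⊢
      unfold greedyAux at h ⊢
      by_cases hc : (acc.any fun m => decide (touches e m)) = true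
      · rw [if_pos hc] at h ⊢
        simp only [List.any_eq_true, decide_eq_true_eq] at hc
        obtain ⟨m, hm, ht⟩ := hc
        exact ⟨m, mem_greedyAux_of_mem_acc _ _ hm, ht, Or.inl hm⟩
      · rw [if_neg hc] at h
        exact absurd (mem_greedyAux_of_mem_acc _ _ (List.mem_cons_self)) h
  | q :: p', acc, s, h => by
      rw [List.cons_append] at h ⊢
      unfold greedyAux at h ⊢
      by_cases hc : (acc.any fun m => decide (touches q m)) = true
      · rw [if_pos hc] at h ⊢
        obtain ⟨m, h1, h2, h3⟩ := witness_aux p' acc s h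
        exact ⟨m, h1, h2, h3.imp id (List.mem_cons_of_mem _)⟩
      · rw [if_neg hc] at h ⊢
        obtain ⟨m, h1, h2, h3⟩ := witness_aux p' (q :: acc) s h
        refine ⟨m, h1, h2, ?_⟩
        rcases h3 with h3 | h3
        · rcases List.mem_cons.1 h3 with h3 | h3
          · exact Or.inr (h3 ▸ List.mem_cons_self)
          · exact Or.inl h3
        · exact Or.inr (List.mem_cons_of_mem _ h3)

lemma idx_lt {α : Type*} [DecidableEq α] {e m : α} :
    ∀ (p s : List α), (p ++ e :: s).Nodup → m ∈ p →
      (p ++ e :: s).idxOf m < (p ++ e :: s).idxOf e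
  | [], _, _, hm => absurd hm List.not_mem_nil
  | a :: p', s, hnd, hm => by
      rw [List.cons_append] at hnd ⊢
      obtain ⟨ha, hnd'⟩ := List.nodup_cons.1 hnd
      have hae : e ≠ a := by
        rintro rfl; exact ha (List.mem_append_right _ (List.mem_cons_self))
      rcases List.mem_cons.1 hm with rfl | hm'
      · rw [List.idxOf_cons_self, List.idxOf_cons_ne _ (Ne.symm hae)]
        exact Nat.succ_pos _
      · have hma : m ≠ a := by rintro rfl; exact ha (List.mem_append_left _ hm')
        rw [List.idxOf_cons_ne _ (Ne.symm hma), List.idxOf_cons_ne _ (Ne.symm hae)]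
        exact Nat.succ_lt_succ (idx_lt p' s hnd' hm')

lemma sorted_idx {α : Type*} [DecidableEq α] {r : α → α → Prop} {l : List α}
    (hs : l.Pairwise r) {a b : α} (ha : a ∈ l) (hb : b ∈ l)
    (h : l.idxOf a < l.idxOf b) : r a b := by
  have h1 : l.idxOf a < l.length := List.idxOf_lt_length_iff.2 ha
  have h2 : l.idxOf b < l.length := List.idxOf_lt_length_iff.2 hb
  have := hs.rel_get_of_lt (a := ⟨l.idxOf a, h1⟩) (b := ⟨l.idxOf b, h2⟩) h
  simpa [List.get_eq_getElem, List.getElem_idxOf] using this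

lemma beq_inst_eq : (instBEqProd : BEq (V × V)) = instBEqOfDecidableEq := by
  have h : ∀ a b : V × V, (@BEq.beq _ instBEqProd a b) = (@BEq.beq _ instBEqOfDecidableEq a b) := by
    intro a b
    have h2 : @BEq.beq _ instBEqOfDecidableEq a b = decide (a = b) := rfl
    by_cases hab : a = b
    · subst hab
      rw [h2, @beq_self_eq_true _ instBEqProd _ a]
      simp
    · rw [h2, (@beq_eq_false_iff_ne _ instBEqProd Prod.instLawfulBEq a b).2 hab]
      simp [hab]
  cases' i1 : (instBEqProd : BEq (V × V)) with f1
  cases' i2 : (instBEqOfDecidableEq : BEq (V × V)) with f2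
  congr
  funext a b
  have := h a b
  rw [i1, i2] at this
  exact this

lemma idx_eq (x : V × V) (L : List (V × V)) :
    List.idxOf x L = @List.idxOf _ instBEqOfDecidableEq x L := by
  rw [beq_inst_eq]

lemma key_lemma (wh wh' : V × V → ℝ) (f : V × V)
    (hlt : wh f < wh' f) (hrest : ∀ e, e ≠ f → wh' e = wh e)
    (l l' : List (V × V)) (hperm : l.Perm l') (hnodup : l.Nodup) (hfl : f ∈ l)
    (hs : l.Pairwise fun a b => wh b ≤ wh a)
    (hs' : l'.Pairwise fun a b => wh' b ≤ wh' a)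
    (hties : ∀ e₁ ∈ l, ∀ e₂ ∈ l, e₁ ≠ f → e₂ ≠ f →
      (l.idxOf e₁ < l.idxOf e₂ ↔ l'.idxOf e₁ < l'.idxOf e₂)) :
    ∀ e, e ∈ l →
      ((e ∈ greedy l ∧ e ∉ greedy l') ∨ (e ∈ greedy l' ∧ e ∉ greedy l)) →
      (f ∈ greedy l' ∧ f ∉ greedy l) ∧
        Relation.ReflTransGen (fun a b =>
          (a ∈ ((greedy l).toFinset \ (greedy l').toFinset) ∪
            ((greedy l').toFinset \ (greedy l).toFinset)) ∧
          (b ∈ ((greedy l).toFinset \ (greedy l').toFinset) ∪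
            ((greedy l').toFinset \ (greedy l).toFinset)) ∧ touches a b) e f := by
  have hnodup' : l'.Nodup := hperm.nodup_iff.1 hnodup
  have hfl' : f ∈ l' := hperm.mem_iff.1 hfl
  have hMl : ∀ a ∈ greedy l, a ∈ l := fun a ha =>
    (mem_of_mem_greedyAux _ _ ha).resolve_left List.not_mem_nil
  have hM'l' : ∀ a ∈ greedy l', a ∈ l' := fun a ha =>
    (mem_of_mem_greedyAux _ _ ha).resolve_left List.not_mem_nil
  have hM'l : ∀ a ∈ greedy l', a ∈ l := fun a ha => hperm.mem_iff.2 (hM'l' a ha)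
  have hsymm : Symmetric (fun a b : V × V => ¬ touches a b) :=
    fun a b h ht => h (touches_symm ht)
  have hmatch : ∀ a ∈ greedy l, ∀ b ∈ greedy l, a ≠ b → ¬ touches a b :=
    fun a ha b hb hab => by
      haveI : Std.Symm (fun a b : V × V => ¬ touches a b) := ⟨fun a b h => hsymm h⟩
      exact (pairwise_greedyAux l [] List.Pairwise.nil).forall ha hb hab
  have hmatch' : ∀ a ∈ greedy l', ∀ b ∈ greedy l', a ≠ b → ¬ touches a b :=
    fun a ha b hb hab => by
      haveI : Std.Symm (fun a b : V × V => ¬ touches a b) := ⟨fun a b h => hsymm h⟩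
      exact (pairwise_greedyAux l' [] List.Pairwise.nil).forall ha hb hab
  have wit : ∀ (L : List (V × V)), L.Nodup → ∀ a ∈ L, a ∉ greedy L →
      ∃ m, m ∈ greedy L ∧ touches a m ∧ L.idxOf m < L.idxOf a := by
    intro L hN a haL haG
    obtain ⟨p, s, rfl⟩ := List.append_of_mem haL
    obtain ⟨m, h1, h2, h3⟩ := witness_aux p [] s haG
    refine ⟨m, h1, h2, ?_⟩
    simp only [idx_eq]
    exact idx_lt p s hN (h3.resolve_left List.not_mem_nil)
  have hidx_transfer : ∀ a, a ∈ l → a ≠ f → l'.idxOf a < l'.idxOf f →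
      l.idxOf a < l.idxOf f := by
    intro a hal hane hlt'
    have hal' : a ∈ l' := hperm.mem_iff.1 hal
    have h1 : wh' f ≤ wh' a := sorted_idx hs' hal' hfl' (by simpa only [idx_eq] using hlt')
    have h2 : wh f < wh a := by rw [← hrest a hane]; linarith
    rcases lt_trichotomy (l.idxOf a) (l.idxOf f) with h | h | h
    · exact h
    · exact absurd ((List.idxOf_inj hal).1 (by simpa only [idx_eq] using h)) hane
    · have := sorted_idx hs hfl hal (by simpa only [idx_eq] using h)
      linarith
  have memD : ∀ a, ((a ∈ greedy l ∧ a ∉ greedy l') ∨ (a ∈ greedy l' ∧ a ∉ greedy l)) →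
      a ∈ ((greedy l).toFinset \ (greedy l').toFinset) ∪
          ((greedy l').toFinset \ (greedy l).toFinset) := by
    intro a ha
    simp only [Finset.mem_union, Finset.mem_sdiff, List.mem_toFinset]
    tauto
  suffices H : ∀ n, ∀ e, e ∈ l → l.idxOf e < n →
      ((e ∈ greedy l ∧ e ∉ greedy l') ∨ (e ∈ greedy l' ∧ e ∉ greedy l)) →
      (f ∈ greedy l' ∧ f ∉ greedy l) ∧
        Relation.ReflTransGen (fun a b =>
          (a ∈ ((greedy l).toFinset \ (greedy l').toFinset) ∪
            ((greedy l').toFinset \ (greedy l).toFinset)) ∧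
          (b ∈ ((greedy l).toFinset \ (greedy l').toFinset) ∪
            ((greedy l').toFinset \ (greedy l).toFinset)) ∧ touches a b) e f by
    intro e he hd
    refine H l.length e he ?_ hd
    simp only [idx_eq]
    exact (@List.idxOf_lt_length_iff _ instBEqOfDecidableEq _ _ _).2 he
  intro n
  induction n with
  | zero => intro e _ h; omega
  | succ n IH =>
    intro e hel hen hd
    rcases hd with ⟨heM, heM'⟩ | ⟨heM', heM⟩
    · -- e ∈ M \ M'
      have hel' : e ∈ l' := hperm.mem_iff.1 hel
      obtain ⟨m, hmM', htem, hmlt'⟩ := wit l' hnodup' e hel' heM'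
      have hmne : m ≠ e := fun h => heM' (h ▸ hmM')
      have hmM : m ∉ greedy l := fun hmm => hmatch e heM m hmm (Ne.symm hmne) htem
      have heD := memD e (Or.inl ⟨heM, heM'⟩)
      have hmD := memD m (Or.inr ⟨hmM', hmM⟩)
      by_cases hmf : m = f
      · subst hmf
        exact ⟨⟨hmM', hmM⟩, Relation.ReflTransGen.single ⟨heD, hmD, htem⟩⟩
      · have hml : m ∈ l := hM'l m hmM'
        have hmlt : l.idxOf m < l.idxOf e := by
          by_cases hef : e = f
          · subst hef; exact hidx_transfer m hml hmf hmlt'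
          · exact (hties m hml e hel hmf hef).2 hmlt'
        obtain ⟨hfres, hpath⟩ := IH m hml (by omega) (Or.inr ⟨hmM', hmM⟩)
        exact ⟨hfres, Relation.ReflTransGen.head ⟨heD, hmD, htem⟩ hpath⟩
    · -- e ∈ M' \ M
      obtain ⟨m, hmM, htem, hmlt⟩ := wit l hnodup e hel heM
      have hmne : m ≠ e := fun h => heM (h ▸ hmM)
      have hmM' : m ∉ greedy l' := fun hmm => hmatch' e heM' m hmm (Ne.symm hmne) htem
      have heD := memD e (Or.inr ⟨heM', heM⟩)
      have hmD := memD m (Or.inl ⟨hmM, hmM'⟩)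
      have hml : m ∈ l := hMl m hmM
      obtain ⟨hfres, hpath⟩ := IH m hml (by omega) (Or.inl ⟨hmM, hmM'⟩)
      exact ⟨hfres, Relation.ReflTransGen.head ⟨heD, hmD, htem⟩ hpath⟩

end Helpers

set_option maxHeartbeats 1000000 in
theorem stmt_18 [Fintype V] (wh wh' : V × V → ℝ) (f : V × V)
    (hlt : wh f < wh' f) (hrest : ∀ e, e ≠ f → wh' e = wh e)
    (l l' : List (V × V)) (hperm : l.Perm l') (hnodup : l.Nodup) (hfl : f ∈ l)
    (hsimple : ∀ e ∈ l, e.1 ≠ e.2)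
    (hs : l.Pairwise fun a b => wh b ≤ wh a)
    (hs' : l'.Pairwise fun a b => wh' b ≤ wh' a)
    (hties : ∀ e₁ ∈ l, ∀ e₂ ∈ l, e₁ ≠ f → e₂ ≠ f →
      (l.idxOf e₁ < l.idxOf e₂ ↔ l'.idxOf e₁ < l'.idxOf e₂)) :
    (greedy l).toFinset = (greedy l').toFinset ∨
      (f ∈ (greedy l').toFinset \ (greedy l).toFinset ∧
        IsSinglePathOrCycle
          (((greedy l).toFinset \ (greedy l').toFinset) ∪
            ((greedy l').toFinset \ (greedy l).toFinset)) ∧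
        f ∈ ((greedy l).toFinset \ (greedy l').toFinset) ∪
            ((greedy l').toFinset \ (greedy l).toFinset)) := by
  have key := key_lemma wh wh' f hlt hrest l l' hperm hnodup hfl hs hs' hties
  have hMl : ∀ a ∈ greedy l, a ∈ l := fun a ha =>
    (mem_of_mem_greedyAux _ _ ha).resolve_left List.not_mem_nil
  have hM'l : ∀ a ∈ greedy l', a ∈ l := fun a ha =>
    hperm.mem_iff.2 ((mem_of_mem_greedyAux _ _ ha).resolve_left List.not_mem_nil)
  have hsymm : Symmetric (fun a b : V × V => ¬ touches a b) :=
    fun a b h ht => h (touches_symm ht)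
  have hmatch : ∀ a ∈ greedy l, ∀ b ∈ greedy l, a ≠ b → ¬ touches a b :=
    fun a ha b hb hab => by
      haveI : Std.Symm (fun a b : V × V => ¬ touches a b) := ⟨fun a b h => hsymm h⟩
      exact (pairwise_greedyAux l [] List.Pairwise.nil).forall ha hb hab
  have hmatch' : ∀ a ∈ greedy l', ∀ b ∈ greedy l', a ≠ b → ¬ touches a b :=
    fun a ha b hb hab => by
      haveI : Std.Symm (fun a b : V × V => ¬ touches a b) := ⟨fun a b h => hsymm h⟩
      exact (pairwise_greedyAux l' [] List.Pairwise.nil).forall ha hb hab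
  set D := ((greedy l).toFinset \ (greedy l').toFinset) ∪
      ((greedy l').toFinset \ (greedy l).toFinset) with hDdef
  have hDmem : ∀ a, a ∈ D ↔ ((a ∈ greedy l ∧ a ∉ greedy l') ∨ (a ∈ greedy l' ∧ a ∉ greedy l)) := by
    intro a
    simp only [hDdef, Finset.mem_union, Finset.mem_sdiff, List.mem_toFinset]
  have hmeml : ∀ a ∈ D, a ∈ l := by
    intro a ha
    rcases (hDmem a).1 ha with ⟨h1, _⟩ | ⟨h1, _⟩
    · exact hMl a h1
    · exact hM'l a h1
  by_cases hD : D = ∅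
  · left
    ext x
    simp only [List.mem_toFinset]
    constructor
    · intro hx
      by_contra hx'
      have : x ∈ D := (hDmem x).2 (Or.inl ⟨hx, hx'⟩)
      rw [hD] at this; exact absurd this (Finset.notMem_empty x)
    · intro hx
      by_contra hx'
      have : x ∈ D := (hDmem x).2 (Or.inr ⟨hx, hx'⟩)
      rw [hD] at this; exact absurd this (Finset.notMem_empty x)
  · right
    obtain ⟨e₀, he₀⟩ := Finset.nonempty_iff_ne_empty.2 hD
    have hd₀ := (hDmem e₀).1 he₀
    obtain ⟨⟨hfM', hfM⟩, _⟩ := key e₀ (hmeml e₀ he₀) hd₀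
    have hfD : f ∈ D := (hDmem f).2 (Or.inr ⟨hfM', hfM⟩)
    refine ⟨?_, ⟨?_, ?_⟩, hfD⟩
    · simp only [Finset.mem_sdiff, List.mem_toFinset]
      exact ⟨hfM', hfM⟩
    · -- degree bound
      intro v
      have hsub : D.filter (fun e => e.1 = v ∨ e.2 = v) ⊆
          ((greedy l).toFinset.filter (fun e => e.1 = v ∨ e.2 = v)) ∪
          ((greedy l').toFinset.filter (fun e => e.1 = v ∨ e.2 = v)) := by
        intro a ha
        rw [Finset.mem_filter] at ha
        rcases (hDmem a).1 ha.1 with ⟨h1, _⟩ | ⟨h1, _⟩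
        · exact Finset.mem_union_left _ (Finset.mem_filter.2 ⟨List.mem_toFinset.2 h1, ha.2⟩)
        · exact Finset.mem_union_right _ (Finset.mem_filter.2 ⟨List.mem_toFinset.2 h1, ha.2⟩)
      have hcard1 : ((greedy l).toFinset.filter (fun e => e.1 = v ∨ e.2 = v)).card ≤ 1 := by
        refine Finset.card_le_one.2 ?_
        intro a ha b hb
        rw [Finset.mem_filter, List.mem_toFinset] at ha hb
        by_contra hab
        refine hmatch a ha.1 b hb.1 hab ?_
        unfold touches
        rcases ha.2 with h1 | h1 <;> rcases hb.2 with h2 | h2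
        · exact Or.inl (h1.trans h2.symm)
        · exact Or.inr (Or.inl (h1.trans h2.symm))
        · exact Or.inr (Or.inr (Or.inl (h1.trans h2.symm)))
        · exact Or.inr (Or.inr (Or.inr (h1.trans h2.symm)))
      have hcard2 : ((greedy l').toFinset.filter (fun e => e.1 = v ∨ e.2 = v)).card ≤ 1 := by
        refine Finset.card_le_one.2 ?_
        intro a ha b hb
        rw [Finset.mem_filter, List.mem_toFinset] at ha hb
        by_contra hab
        refine hmatch' a ha.1 b hb.1 hab ?_
        unfold touches
        rcases ha.2 with h1 | h1 <;> rcases hb.2 with h2 | h2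
        · exact Or.inl (h1.trans h2.symm)
        · exact Or.inr (Or.inl (h1.trans h2.symm))
        · exact Or.inr (Or.inr (Or.inl (h1.trans h2.symm)))
        · exact Or.inr (Or.inr (Or.inr (h1.trans h2.symm)))
      calc (D.filter (fun e => e.1 = v ∨ e.2 = v)).card
          ≤ _ := Finset.card_le_card hsub
        _ ≤ _ := Finset.card_union_le _ _
        _ ≤ 2 := by omega
    · -- connectivity
      intro a ha b hb
      have hRsymm : Symmetric (fun x y : V × V => x ∈ D ∧ y ∈ D ∧ touches x y) :=
        fun x y ⟨h1, h2, h3⟩ => ⟨h2, h1, touches_symm h3⟩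
      obtain ⟨_, hpa⟩ := key a (hmeml a ha) ((hDmem a).1 ha)
      obtain ⟨_, hpb⟩ := key b (hmeml b hb) ((hDmem b).1 hb)
      haveI : Std.Symm (fun x y : V × V => x ∈ D ∧ y ∈ D ∧ touches x y) := ⟨fun x y h => hRsymm h⟩
      exact hpa.trans ((Relation.ReflTransGen.stdSymm).symm _ _ hpb)
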